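/- Let q, a, b be nonzero complex numbers with |q| > 1, and let z be a complex number with |z| · max(|ab|, |ab|^{−1}, |a b^{−1}|, |a^{−1} b|) < |q|^2. Then the series Σ_{n≥1} (z^n/n) (a^n − a^{−n})(b^n − b^{−n})/(q^{2n} − q^{−2n}) converges absolutely and exp( Σ_{n≥1} (z^n/n) (a^n − a^{−n})(b^n − b^{−n})/(q^{2n} − q^{−2n}) ) = ∏_{k=0}^{∞} (1 − z a b^{−1} q^{−2−4k})(1 − z a^{−1} b q^{−2−4k}) / ( (1 − z a b q^{−2−4k})(1 − z a^{−1} b^{−1} q^{−2−4k}) ). (With a = q^λ, b = q^μ this identifies the scalar factor f_{λ,μ}(z) = exp( Σ_{n≥1} (q − q^{−1}) [λn]_q [μn]_q/[2n]_q · z^n/n ) of the trigonometric R-matrix with the ratio of infinite q-Pochhammer products (z q^{λ−μ−2}; q^{−4})_∞ (z q^{μ−λ−2}; q^{−4})_∞ / ( (z q^{λ+μ−2}; q^{−4})_∞ (z q^{−λ−μ−2}; q^{−4})_∞ ).) -/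

import Mathlib

open Complex

private lemma one_sub_ne {u : ℂ} (h : ‖u‖ < 1) : 1 - u ≠ 0 := by
  intro h0
  rw [sub_eq_zero] at h0
  rw [← h0] at h
  simp at h

/-- auxiliary summand -/
noncomputable def Gt (q z c : ℂ) (n : ℕ) : ℂ :=
  (z * c) ^ (n + 1) / ((n : ℂ) + 1) *
    (q ^ (-2 * ((n : ℤ) + 1)) / (1 - q ^ (-4 * ((n : ℤ) + 1))))

private lemma aux (q c z : ℂ) (hq : 1 < ‖q‖) (hzc : ‖z * c‖ < ‖q‖ ^ 2) :
    (∀ k : ℕ, ‖z * c * q ^ (-2 - 4 * (k : ℤ))‖ < 1) ∧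
    Summable (fun k : ℕ => -Complex.log (1 - z * c * q ^ (-2 - 4 * (k : ℤ)))) ∧
    Summable (fun n : ℕ => ‖Gt q z c n‖) ∧
    HasSum (Gt q z c)
      (∑' k : ℕ, -Complex.log (1 - z * c * q ^ (-2 - 4 * (k : ℤ)))) := by
  have hq0 : q ≠ 0 := by
    intro h; rw [h] at hq; simp at hq; linarith
  have hqn : (0:ℝ) < ‖q‖ := by linarith
  set d : ℂ := z * c * q ^ (-2 : ℤ) with hd_def
  set w : ℂ := q ^ (-4 : ℤ) with hw_def
  have hd : ‖d‖ < 1 := by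
    rw [hd_def, norm_mul, norm_zpow]
    have h2 : ‖q‖ ^ (-2 : ℤ) = (‖q‖ ^ 2)⁻¹ := by rw [zpow_neg]; norm_cast
    rw [h2, mul_inv_lt_iff₀ (by positivity), one_mul]
    exact hzc
  have hd0 : 0 ≤ ‖d‖ := norm_nonneg d
  have hw : ‖w‖ < 1 := by
    rw [hw_def, norm_zpow]
    calc ‖q‖ ^ (-4 : ℤ) < ‖q‖ ^ (0 : ℤ) := by
          rw [zpow_lt_zpow_iff_right₀ hq]; norm_num
      _ = 1 := by norm_num
  have hw0 : 0 ≤ ‖w‖ := norm_nonneg w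
  -- rewrite u_k
  have hrew : ∀ k : ℕ, z * c * q ^ (-2 - 4 * (k : ℤ)) = d * w ^ k := by
    intro k
    rw [hd_def, hw_def, mul_assoc (z*c), ← zpow_natCast (q ^ (-4:ℤ)) k, ← zpow_mul,
      ← zpow_add₀ hq0]
    ring_nf
  have hu : ∀ k : ℕ, ‖d * w ^ k‖ < 1 := by
    intro k
    rw [norm_mul, norm_pow]
    calc ‖d‖ * ‖w‖ ^ k ≤ ‖d‖ * 1 :=
          mul_le_mul_of_nonneg_left (pow_le_one₀ hw0 hw.le) hd0
      _ < 1 := by rwa [mul_one]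
  -- summability of double family
  have hFsummable : Summable (fun p : ℕ × ℕ => (d * w ^ p.2) ^ (p.1 + 1) / ((p.1 : ℂ) + 1)) := by
    have hgeo1 : Summable (fun n : ℕ => ‖d‖ ^ (n + 1)) :=
      (summable_nat_add_iff 1).mpr (summable_geometric_of_lt_one hd0 hd)
    have hgeo2 : Summable (fun k : ℕ => ‖w‖ ^ k) := summable_geometric_of_lt_one hw0 hw
    have hprod : Summable (fun p : ℕ × ℕ => ‖d‖ ^ (p.1 + 1) * ‖w‖ ^ p.2) :=
      hgeo1.mul_of_nonneg hgeo2 (fun n => by positivity) (fun k => by positivity)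
    apply Summable.of_norm_bounded hprod
    rintro ⟨n, k⟩
    have hone : (1:ℝ) ≤ ‖((n:ℂ) + 1)‖ := by
      rw [show ((n:ℂ) + 1) = ((n+1 : ℕ) : ℂ) by push_cast; ring, Complex.norm_natCast]
      push_cast; linarith [Nat.cast_nonneg (α := ℝ) n]
    have h1 : ‖(d * w ^ k) ^ (n + 1) / ((n : ℂ) + 1)‖ ≤ ‖d * w ^ k‖ ^ (n + 1) := by
      rw [norm_div, norm_pow]
      exact div_le_self (by positivity) hone
    refine h1.trans ?_
    rw [norm_mul, norm_pow, mul_pow, ← pow_mul]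
    apply mul_le_mul_of_nonneg_left _ (by positivity)
    apply pow_le_pow_of_le_one hw0 hw.le
    nlinarith [Nat.le_mul_of_pos_right k (Nat.succ_pos n)]
  -- fixed k : sum over n is the log series
  have hinner : ∀ k : ℕ, HasSum (fun n : ℕ => (d * w ^ k) ^ (n + 1) / ((n : ℂ) + 1))
      (-Complex.log (1 - d * w ^ k)) := by
    intro k
    have h0 := Complex.hasSum_taylorSeries_neg_log (hu k)
    have h1 := (hasSum_nat_add_iff' (f := fun n : ℕ => (d * w ^ k) ^ n / n) 1).mpr h0
    simp only [Finset.range_one, Finset.sum_singleton, Nat.cast_zero, pow_zero,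
      div_zero, sub_zero] at h1
    convert h1 using 2 with n
    · rfl
    push_cast
    ring_nf
  -- fixed n : sum over k is geometric
  have houter : ∀ n : ℕ, HasSum (fun k : ℕ => (d * w ^ k) ^ (n + 1) / ((n : ℂ) + 1))
      (d ^ (n + 1) / ((n : ℂ) + 1) * (1 - w ^ (n + 1))⁻¹) := by
    intro n
    have hwn : ‖w ^ (n + 1)‖ < 1 := by
      rw [norm_pow]; exact pow_lt_one₀ hw0 hw n.succ_ne_zero
    have h0 := (hasSum_geometric_of_norm_lt_one hwn).mul_left (d ^ (n + 1) / ((n : ℂ) + 1))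
    convert h0 using 2 with k
    · rfl
    rw [mul_pow, ← pow_mul, ← pow_mul, mul_comm k (n+1)]
    ring
  -- Fubini
  set S : ℂ := ∑' p : ℕ × ℕ, (d * w ^ p.2) ^ (p.1 + 1) / ((p.1 : ℂ) + 1) with hS_def
  have hA : HasSum (fun n : ℕ => d ^ (n + 1) / ((n : ℂ) + 1) * (1 - w ^ (n + 1))⁻¹) S :=
    hFsummable.hasSum.prod_fiberwise houter
  have hswap : HasSum ((fun p : ℕ × ℕ => (d * w ^ p.2) ^ (p.1 + 1) / ((p.1 : ℂ) + 1)) ∘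
      ⇑(Equiv.prodComm ℕ ℕ)) S :=
    ((Equiv.prodComm ℕ ℕ).hasSum_iff).mpr hFsummable.hasSum
  have hB : HasSum (fun k : ℕ => -Complex.log (1 - d * w ^ k)) S :=
    hswap.prod_fiberwise (fun k => hinner k)
  -- translate back
  have hGt : ∀ n : ℕ, Gt q z c n = d ^ (n + 1) / ((n : ℂ) + 1) * (1 - w ^ (n + 1))⁻¹ := by
    intro n
    rw [Gt, hd_def, hw_def]
    rw [show (-2 : ℤ) * ((n : ℤ) + 1) = (-2) * ((n+1 : ℕ) : ℤ) by push_cast; ring,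
      show (-4 : ℤ) * ((n : ℤ) + 1) = (-4) * ((n+1 : ℕ) : ℤ) by push_cast; ring,
      zpow_mul q (-2 : ℤ), zpow_mul q (-4 : ℤ), zpow_natCast, zpow_natCast, mul_pow]
    ring
  have hLog : ∀ k : ℕ, -Complex.log (1 - z * c * q ^ (-2 - 4 * (k : ℤ)))
      = -Complex.log (1 - d * w ^ k) := fun k => by rw [hrew k]
  refine ⟨fun k => by rw [hrew k]; exact hu k, ?_, ?_, ?_⟩
  · exact (funext hLog) ▸ hB.summable
  · -- norm summability of Gt
    have hbound : ∀ n : ℕ, ‖Gt q z c n‖ ≤ ‖d‖ ^ (n + 1) * (1 - ‖w‖)⁻¹ := by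
      intro n
      rw [hGt n, norm_mul, norm_div, norm_pow, norm_inv]
      have hone : (1:ℝ) ≤ ‖((n:ℂ) + 1)‖ := by
        rw [show ((n:ℂ) + 1) = ((n+1 : ℕ) : ℂ) by push_cast; ring, Complex.norm_natCast]
        push_cast; linarith [Nat.cast_nonneg (α := ℝ) n]
      have h2 : 1 - ‖w‖ ≤ ‖1 - w ^ (n + 1)‖ := by
        have h3 := norm_sub_norm_le (1 : ℂ) (w ^ (n + 1))
        rw [norm_one, norm_pow] at h3
        have h4 : ‖w‖ ^ (n + 1) ≤ ‖w‖ := by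
          calc ‖w‖ ^ (n + 1) ≤ ‖w‖ ^ 1 := pow_le_pow_of_le_one hw0 hw.le (by omega)
            _ = ‖w‖ := pow_one _
        linarith
      have h5 : ‖1 - w ^ (n + 1)‖⁻¹ ≤ (1 - ‖w‖)⁻¹ := by
        apply inv_anti₀ (by linarith) h2
      exact mul_le_mul (div_le_self (by positivity) hone) h5 (by positivity) (by positivity)
    apply Summable.of_nonneg_of_le (fun n => norm_nonneg _) hbound
    exact ((summable_nat_add_iff 1).mpr (summable_geometric_of_lt_one hd0 hd)).mul_right _
  · have : S = ∑' k : ℕ, -Complex.log (1 - z * c * q ^ (-2 - 4 * (k : ℤ))) := by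
      rw [funext hLog]
      exact hB.tsum_eq.symm
    rw [← this, funext hGt]
    exact hA


private lemma alg (A B P N Z : ℂ) (hP : P ≠ 0)
    (h2 : (1:ℂ) - (P ^ 4)⁻¹ ≠ 0) :
    Z / N * ((A - A⁻¹) * (B - B⁻¹) / (P ^ 2 - (P ^ 2)⁻¹))
      = Z * (A * B) / N * ((P ^ 2)⁻¹ / (1 - (P ^ 4)⁻¹))
        - Z * (A * B⁻¹) / N * ((P ^ 2)⁻¹ / (1 - (P ^ 4)⁻¹))
        - Z * (A⁻¹ * B) / N * ((P ^ 2)⁻¹ / (1 - (P ^ 4)⁻¹))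
        + Z * (A⁻¹ * B⁻¹) / N * ((P ^ 2)⁻¹ / (1 - (P ^ 4)⁻¹)) := by
  have k2 : (1:ℂ) - (P ^ 4)⁻¹ = (P ^ 4 - 1) / P ^ 4 := by field_simp
  have h4 : P ^ 4 - 1 ≠ 0 := by
    intro h
    rw [k2, h, zero_div] at h2
    exact h2 rfl
  have key : ((P ^ 2)⁻¹ / (1 - (P ^ 4)⁻¹)) = (P ^ 2 - (P ^ 2)⁻¹)⁻¹ := by
    have k1 : P ^ 2 - (P ^ 2)⁻¹ = (P ^ 4 - 1) / P ^ 2 := by field_simp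
    rw [k1, k2]
    field_simp
  rw [key]
  ring

private lemma summand_eq (q a b z : ℂ) (hq0 : q ≠ 0) (ha : a ≠ 0) (hb : b ≠ 0)
    (hq : 1 < ‖q‖) (n : ℕ) :
    z ^ (n + 1) / ((n : ℂ) + 1) *
        ((a ^ ((n : ℤ) + 1) - a ^ (-((n : ℤ) + 1))) * (b ^ ((n : ℤ) + 1) - b ^ (-((n : ℤ) + 1))) /
          (q ^ (2 * ((n : ℤ) + 1)) - q ^ (-2 * ((n : ℤ) + 1))))
      = Gt q z (a * b) n - Gt q z (a * b⁻¹) n - Gt q z (a⁻¹ * b) n + Gt q z (a⁻¹ * b⁻¹) n := by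
  simp only [Gt]
  rw [show ((n : ℤ) + 1) = ((n + 1 : ℕ) : ℤ) by push_cast; ring]
  rw [show (2 : ℤ) * ((n + 1 : ℕ) : ℤ) = ((2 * (n + 1) : ℕ) : ℤ) by push_cast; ring]
  rw [show (-2 : ℤ) * ((n + 1 : ℕ) : ℤ) = -((2 * (n + 1) : ℕ) : ℤ) by push_cast; ring]
  rw [show (-4 : ℤ) * ((n + 1 : ℕ) : ℤ) = -((4 * (n + 1) : ℕ) : ℤ) by push_cast; ring]
  simp only [zpow_neg, zpow_natCast]
  rw [show 2 * (n + 1) = (n + 1) * 2 by ring, show 4 * (n + 1) = (n + 1) * 4 by ring,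
    pow_mul q (n + 1) 2, pow_mul q (n + 1) 4]
  simp only [mul_pow, inv_pow]
  apply alg
  · exact pow_ne_zero _ hq0
  · intro h
    rw [sub_eq_zero] at h
    have h1 : (1:ℝ) < ‖(q ^ (n+1)) ^ 4‖ := by
      rw [norm_pow, norm_pow]
      exact one_lt_pow₀ (one_lt_pow₀ hq (by omega)) (by omega)
    have h2 : ‖((q ^ (n+1)) ^ 4)⁻¹‖ < 1 := by
      rw [norm_inv, inv_lt_one_iff₀]; right; exact h1
    rw [← h] at h2; simp at h2


/-- The scalar factor of the trigonometric R-matrix as a ratio of q-Pochhammer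
products: for `|q| > 1` and `z` small enough,
`exp( Σ_{n≥1} (z^n/n) (a^n − a^{−n})(b^n − b^{−n})/(q^{2n} − q^{−2n}) )
 = ∏_{k≥0} (1 − z a b^{−1} q^{−2−4k})(1 − z a^{−1} b q^{−2−4k})
          / ( (1 − z a b q^{−2−4k})(1 − z a^{−1} b^{−1} q^{−2−4k}) )`,
the series converging absolutely and the product converging.
With `a = q^λ`, `b = q^μ` this identifies
`f_{λ,μ}(z) = exp( Σ_{n≥1} (q − q^{−1}) [λn]_q [μn]_q/[2n]_q · z^n/n )` with
`(z q^{λ−μ−2}; q^{−4})_∞ (z q^{μ−λ−2}; q^{−4})_∞ /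
 ((z q^{λ+μ−2}; q^{−4})_∞ (z q^{−λ−μ−2}; q^{−4})_∞)`. -/
theorem scalar_factor_pochhammer (q a b z : ℂ) (hq0 : q ≠ 0) (ha : a ≠ 0)
    (hb : b ≠ 0) (hq : 1 < ‖q‖)
    (hz : ‖z‖ * max (max ‖a * b‖ ‖(a * b)⁻¹‖) (max ‖a * b⁻¹‖ ‖a⁻¹ * b‖) < ‖q‖ ^ 2) :
    Summable (fun n : ℕ => ‖z ^ (n + 1) / ((n : ℂ) + 1) *
        ((a ^ ((n : ℤ) + 1) - a ^ (-((n : ℤ) + 1))) * (b ^ ((n : ℤ) + 1) - b ^ (-((n : ℤ) + 1))) /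
          (q ^ (2 * ((n : ℤ) + 1)) - q ^ (-2 * ((n : ℤ) + 1))))‖) ∧
    Multipliable (fun k : ℕ =>
        (1 - z * a * b⁻¹ * q ^ (-2 - 4 * (k : ℤ))) * (1 - z * a⁻¹ * b * q ^ (-2 - 4 * (k : ℤ))) /
          ((1 - z * a * b * q ^ (-2 - 4 * (k : ℤ))) *
            (1 - z * a⁻¹ * b⁻¹ * q ^ (-2 - 4 * (k : ℤ))))) ∧
    Complex.exp (∑' n : ℕ, z ^ (n + 1) / ((n : ℂ) + 1) *
        ((a ^ ((n : ℤ) + 1) - a ^ (-((n : ℤ) + 1))) * (b ^ ((n : ℤ) + 1) - b ^ (-((n : ℤ) + 1))) /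
          (q ^ (2 * ((n : ℤ) + 1)) - q ^ (-2 * ((n : ℤ) + 1)))))
      = ∏' k : ℕ,
          (1 - z * a * b⁻¹ * q ^ (-2 - 4 * (k : ℤ))) * (1 - z * a⁻¹ * b * q ^ (-2 - 4 * (k : ℤ))) /
            ((1 - z * a * b * q ^ (-2 - 4 * (k : ℤ))) *
              (1 - z * a⁻¹ * b⁻¹ * q ^ (-2 - 4 * (k : ℤ)))) := by
  have hzc : ∀ c : ℂ, ‖c‖ ≤ max (max ‖a * b‖ ‖(a * b)⁻¹‖) (max ‖a * b⁻¹‖ ‖a⁻¹ * b‖) →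
      ‖z * c‖ < ‖q‖ ^ 2 := by
    intro c hc
    rw [norm_mul]
    calc ‖z‖ * ‖c‖ ≤ ‖z‖ * _ := mul_le_mul_of_nonneg_left hc (norm_nonneg z)
      _ < ‖q‖ ^ 2 := hz
  obtain ⟨hlt3, hlog3, hns3, hhs3⟩ :=
    aux q (a * b) z hq (hzc _ (le_trans (le_max_left _ _) (le_max_left _ _)))
  obtain ⟨hlt1, hlog1, hns1, hhs1⟩ :=
    aux q (a * b⁻¹) z hq (hzc _ (le_trans (le_max_left _ _) (le_max_right _ _)))
  obtain ⟨hlt2, hlog2, hns2, hhs2⟩ :=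
    aux q (a⁻¹ * b) z hq (hzc _ (le_trans (le_max_right _ _) (le_max_right _ _)))
  obtain ⟨hlt4, hlog4, hns4, hhs4⟩ :=
    aux q (a⁻¹ * b⁻¹) z hq (hzc _ (by
      rw [show a⁻¹ * b⁻¹ = (a * b)⁻¹ by rw [mul_inv]]
      exact le_trans (le_max_right _ _) (le_max_left _ _)))
  have hsummand := summand_eq q a b z hq0 ha hb hq
  -- claim 1
  have claim1 : Summable (fun n : ℕ => ‖z ^ (n + 1) / ((n : ℂ) + 1) *
      ((a ^ ((n : ℤ) + 1) - a ^ (-((n : ℤ) + 1))) * (b ^ ((n : ℤ) + 1) - b ^ (-((n : ℤ) + 1))) /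
        (q ^ (2 * ((n : ℤ) + 1)) - q ^ (-2 * ((n : ℤ) + 1))))‖) := by
    refine Summable.of_nonneg_of_le (fun n => norm_nonneg _) ?_
      (((hns3.add hns1).add hns2).add hns4)
    · intro n
      rw [hsummand n]
      calc ‖Gt q z (a * b) n - Gt q z (a * b⁻¹) n - Gt q z (a⁻¹ * b) n + Gt q z (a⁻¹ * b⁻¹) n‖
          ≤ ‖Gt q z (a * b) n - Gt q z (a * b⁻¹) n - Gt q z (a⁻¹ * b) n‖ +
            ‖Gt q z (a⁻¹ * b⁻¹) n‖ := norm_add_le _ _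
        _ ≤ (‖Gt q z (a * b) n - Gt q z (a * b⁻¹) n‖ + ‖Gt q z (a⁻¹ * b) n‖) +
            ‖Gt q z (a⁻¹ * b⁻¹) n‖ := by gcongr; exact norm_sub_le _ _
        _ ≤ ((‖Gt q z (a * b) n‖ + ‖Gt q z (a * b⁻¹) n‖) + ‖Gt q z (a⁻¹ * b) n‖) +
            ‖Gt q z (a⁻¹ * b⁻¹) n‖ := by gcongr; exact norm_sub_le _ _
  -- HasSum for the n-series
  have h0 := ((hhs3.sub hhs1).sub hhs2).add hhs4
  have hfun : (fun n : ℕ => Gt q z (a * b) n - Gt q z (a * b⁻¹) n - Gt q z (a⁻¹ * b) n +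
      Gt q z (a⁻¹ * b⁻¹) n)
      = fun n : ℕ => z ^ (n + 1) / ((n : ℂ) + 1) *
        ((a ^ ((n : ℤ) + 1) - a ^ (-((n : ℤ) + 1))) * (b ^ ((n : ℤ) + 1) - b ^ (-((n : ℤ) + 1))) /
          (q ^ (2 * ((n : ℤ) + 1)) - q ^ (-2 * ((n : ℤ) + 1)))) :=
    funext fun n => (hsummand n).symm
  rw [hfun] at h0
  -- HasSum for the k-series of logs
  have hL := ((hlog3.hasSum.sub hlog1.hasSum).sub hlog2.hasSum).add hlog4.hasSum
  have hp := hL.cexp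
  have hfun2 : (cexp ∘ fun k : ℕ =>
      -Complex.log (1 - z * (a * b) * q ^ (-2 - 4 * (k : ℤ)))
        - -Complex.log (1 - z * (a * b⁻¹) * q ^ (-2 - 4 * (k : ℤ)))
        - -Complex.log (1 - z * (a⁻¹ * b) * q ^ (-2 - 4 * (k : ℤ)))
        + -Complex.log (1 - z * (a⁻¹ * b⁻¹) * q ^ (-2 - 4 * (k : ℤ))))
      = fun k : ℕ =>
        (1 - z * a * b⁻¹ * q ^ (-2 - 4 * (k : ℤ))) * (1 - z * a⁻¹ * b * q ^ (-2 - 4 * (k : ℤ))) /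
          ((1 - z * a * b * q ^ (-2 - 4 * (k : ℤ))) *
            (1 - z * a⁻¹ * b⁻¹ * q ^ (-2 - 4 * (k : ℤ)))) := by
    funext k
    have n3 : 1 - z * (a * b) * q ^ (-2 - 4 * (k : ℤ)) ≠ 0 := one_sub_ne (hlt3 k)
    have n1 : 1 - z * (a * b⁻¹) * q ^ (-2 - 4 * (k : ℤ)) ≠ 0 := one_sub_ne (hlt1 k)
    have n2 : 1 - z * (a⁻¹ * b) * q ^ (-2 - 4 * (k : ℤ)) ≠ 0 := one_sub_ne (hlt2 k)
    have n4 : 1 - z * (a⁻¹ * b⁻¹) * q ^ (-2 - 4 * (k : ℤ)) ≠ 0 := one_sub_ne (hlt4 k)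
    simp only [Function.comp_apply, Complex.exp_add, Complex.exp_sub, Complex.exp_neg,
      Complex.exp_log n1, Complex.exp_log n2, Complex.exp_log n3, Complex.exp_log n4]
    rw [show z * (a * b) = z * a * b by ring, show z * (a * b⁻¹) = z * a * b⁻¹ by ring,
      show z * (a⁻¹ * b) = z * a⁻¹ * b by ring, show z * (a⁻¹ * b⁻¹) = z * a⁻¹ * b⁻¹ by ring]
    rw [show z * (a * b) = z * a * b by ring] at n3
    rw [show z * (a * b⁻¹) = z * a * b⁻¹ by ring] at n1
    rw [show z * (a⁻¹ * b) = z * a⁻¹ * b by ring] at n2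
    rw [show z * (a⁻¹ * b⁻¹) = z * a⁻¹ * b⁻¹ by ring] at n4
    field_simp
  rw [hfun2] at hp
  refine ⟨claim1, ⟨_, hp⟩, ?_⟩
  rw [h0.tsum_eq]
  exact hp.tprod_eq.symm
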